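/- If d + t faulty processes cause a disagreement producing a ≥ 2 disagreeing decisions (branches) under voting threshold h, then d + t ≥ (a·h − n)/(a − 1); equivalently, the number of branches satisfies a ≤ (n − (d+t))/(h − (d+t)) whenever h > d + t. -/
import Mathlib


/-- Number-of-branches bound: if `f = d + t` faulty processes create `a ≥ 2`
disagreeing branches under voting threshold `h > f`, i.e. each of the `a`
disjoint honest partitions of size `(n - f)/a` together with the faulty
processes reaches the threshold (`(n - f)/a + f ≥ h`), then
`f ≥ (a·h − n)/(a − 1)` and `a ≤ (n − f)/(h − f)`. -/
theorem branch_bound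
    (n f h a : ℚ) (ha : 2 ≤ a) (hf : 0 ≤ f) (hfh : f < h)
    (hbranch : (n - f) / a + f ≥ h) :
    f ≥ (a * h - n) / (a - 1) ∧ a ≤ (n - f) / (h - f) := by
  have ha0 : (0:ℚ) < a := by linarith
  have hkey : a * (h - f) ≤ n - f := by
    have := (le_div_iff₀ ha0).mp (by linarith [hbranch] : h - f ≤ (n - f) / a)
    linarith
  constructor
  · rw [ge_iff_le, div_le_iff₀ (by linarith : (0:ℚ) < a - 1)]
    nlinarith
  · rw [le_div_iff₀ (by linarith : (0:ℚ) < h - f)]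
    linarith
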